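/- For the parametrized problem min_x cᵀx + ε‖x‖² subject to Gx ≤ h, Ex = q(d), where q is affine in d and ε > 0, the optimal solution map x*(d) is Lipschitz continuous on the set of d for which the problem is feasible. -/

import Mathlib

open scoped RealInnerProductSpace

section qpHelpers
variable {a b : ℕ}

private def emulVecL (M : Matrix (Fin a) (Fin b) ℝ) :
    EuclideanSpace ℝ (Fin b) →ₗ[ℝ] (Fin a → ℝ) where
  toFun x := M.mulVec x
  map_add' x y := Matrix.mulVec_add M x y
  map_smul' r x := Matrix.mulVec_smul M r x

private lemma emulVecL_cont (M : Matrix (Fin a) (Fin b) ℝ) :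
    Continuous fun x : EuclideanSpace ℝ (Fin b) => M.mulVec x :=
  (emulVecL M).continuous_of_finiteDimensional

private lemma emulVecL_bound (M : Matrix (Fin a) (Fin b) ℝ) :
    ∃ C : ℝ, 0 ≤ C ∧ ∀ x : EuclideanSpace ℝ (Fin b), ‖M.mulVec x‖ ≤ C * ‖x‖ := by
  rcases ((emulVecL M).toContinuousLinearMap).isBoundedLinearMap.bound with ⟨C, hC0, hC⟩
  exact ⟨C, le_of_lt hC0, fun x => hC x⟩

private lemma aux_ker_bound {E F : Type*} [NormedAddCommGroup E] [InnerProductSpace ℝ E]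
    [FiniteDimensional ℝ E] [NormedAddCommGroup F] [NormedSpace ℝ F]
    (Φ : E →ₗ[ℝ] F) :
    ∃ C : ℝ, 0 ≤ C ∧ ∀ w ∈ (LinearMap.ker Φ)ᗮ, ‖w‖ ≤ C * ‖Φ w‖ := by
  classical
  set K := (LinearMap.ker Φ)ᗮ with hK
  set Ψ : K →ₗ[ℝ] F := Φ.comp K.subtype with hΨ
  have hinj : Function.Injective Ψ := by
    rw [← LinearMap.ker_eq_bot, LinearMap.ker_eq_bot']
    intro ⟨w, hw⟩ hw0
    have h1 : Φ w = 0 := hw0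
    have : w ∈ LinearMap.ker Φ ⊓ (LinearMap.ker Φ)ᗮ := ⟨h1, hw⟩
    rw [Submodule.inf_orthogonal_eq_bot] at this
    exact Subtype.ext (by simpa using this)
  let e : K ≃ₗ[ℝ] LinearMap.range Ψ := LinearEquiv.ofInjective Ψ hinj
  obtain ⟨C, hC0, hC⟩ : ∃ C, 0 < C ∧ ∀ y, ‖e.symm y‖ ≤ C * ‖y‖ := by
    rcases (e.symm.toLinearMap.toContinuousLinearMap).isBoundedLinearMap.bound with ⟨C, hC0, hC⟩
    exact ⟨C, hC0, fun y => by simpa using hC y⟩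
  refine ⟨C, le_of_lt hC0, fun w hw => ?_⟩
  have key : (⟨w, hw⟩ : K) = e.symm ⟨Ψ ⟨w, hw⟩, LinearMap.mem_range_self _ _⟩ := by
    have : e ⟨w, hw⟩ = ⟨Ψ ⟨w, hw⟩, LinearMap.mem_range_self _ _⟩ := by
      apply Subtype.ext
      simp [e, LinearEquiv.ofInjective_apply]
    rw [← this, LinearEquiv.symm_apply_apply]
  calc ‖w‖ = ‖(⟨w, hw⟩ : K)‖ := rfl
    _ = ‖e.symm ⟨Ψ ⟨w, hw⟩, LinearMap.mem_range_self _ _⟩‖ := by rw [← key]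
    _ ≤ C * ‖Ψ ⟨w, hw⟩‖ := hC _
    _ = C * ‖Φ w‖ := rfl

private def maskL (J : Finset (Fin a)) : (Fin a → ℝ) →ₗ[ℝ] (Fin a → ℝ) where
  toFun g i := if i ∈ J then g i else 0
  map_add' g₁ g₂ := by funext i; by_cases hi : i ∈ J <;> simp [hi]
  map_smul' r g := by funext i; by_cases hi : i ∈ J <;> simp [hi]

end qpHelpers

set_option maxHeartbeats 4000000 in
/-- For the parametrized strongly convex QP
`min ⟨c,x⟩ + ε‖x‖²  s.t.  Gx ≤ h, Ex = q(d)` with `q` affine and `ε > 0`,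
the optimal solution map `d ↦ x*(d)` is Lipschitz on the set of feasible `d`. -/
theorem qp_solution_map_lipschitz (n m₁ m₂ p : ℕ)
    (G : Matrix (Fin m₁) (Fin n) ℝ) (h : Fin m₁ → ℝ)
    (E : Matrix (Fin m₂) (Fin n) ℝ)
    (Q : Matrix (Fin m₂) (Fin p) ℝ) (q₀ : Fin m₂ → ℝ)
    (c : EuclideanSpace ℝ (Fin n)) (ε : ℝ) (hε : 0 < ε)
    (S : EuclideanSpace ℝ (Fin p) → Set (EuclideanSpace ℝ (Fin n)))
    (hS : ∀ d, S d = {x : EuclideanSpace ℝ (Fin n) | (∀ i, G.mulVec x i ≤ h i) ∧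
        ∀ j, E.mulVec x j = Q.mulVec d j + q₀ j})
    (Dfeas : Set (EuclideanSpace ℝ (Fin p)))
    (hDfeas : Dfeas = {d | (S d).Nonempty})
    (xstar : EuclideanSpace ℝ (Fin p) → EuclideanSpace ℝ (Fin n))
    (hopt : ∀ d ∈ Dfeas, xstar d ∈ S d ∧
      ∀ y ∈ S d, ⟪c, xstar d⟫ + ε * ‖xstar d‖ ^ 2 ≤ ⟪c, y⟫ + ε * ‖y‖ ^ 2) :
    ∃ Lc : ℝ, 0 ≤ Lc ∧ ∀ d ∈ Dfeas, ∀ d' ∈ Dfeas,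
      ‖xstar d - xstar d'‖ ≤ Lc * ‖d - d'‖ := by
  classical
  have hmem : ∀ d x, x ∈ S d ↔ ((∀ i, G.mulVec x i ≤ h i) ∧
      ∀ j, E.mulVec x j = Q.mulVec d j + q₀ j) := by
    intro d x; rw [hS d]; rfl
  set z : EuclideanSpace ℝ (Fin n) := (-(2*ε)⁻¹) • c with hz
  have hobj : ∀ x : EuclideanSpace ℝ (Fin n),
      ⟪c, x⟫ + ε * ‖x‖ ^ 2 = ε * ‖x - z‖ ^ 2 - ε * ‖z‖ ^ 2 := by
    intro x
    have h1 : ‖x - z‖ ^ 2 = ‖x‖ ^ 2 - 2 * ⟪x, z⟫ + ‖z‖ ^ 2 := norm_sub_sq_real x z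
    have h2 : ⟪x, z⟫ = -(2*ε)⁻¹ * ⟪c, x⟫ := by
      rw [hz, real_inner_smul_right, real_inner_comm]
    have h3 : (2*ε) * (2*ε)⁻¹ = 1 := mul_inv_cancel₀ (by positivity)
    have h4 : (⟪c,x⟫ : ℝ) * ε * ε⁻¹ = ⟪c,x⟫ := by field_simp
    rw [h1, h2]; ring_nf; linarith [h4]
  have hstar : ∀ d ∈ Dfeas, xstar d ∈ S d := fun d hd => (hopt d hd).1
  have hmin : ∀ d ∈ Dfeas, ∀ y ∈ S d, ‖xstar d - z‖ ≤ ‖y - z‖ := by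
    intro d hd y hy
    have h1 := (hopt d hd).2 y hy
    rw [hobj (xstar d), hobj y] at h1
    have h2 : ‖xstar d - z‖ ^ 2 ≤ ‖y - z‖ ^ 2 := by nlinarith
    exact (pow_le_pow_iff_left₀ (norm_nonneg _) (norm_nonneg _) two_ne_zero).mp h2
  have hmix : ∀ (d₁ d₂ : EuclideanSpace ℝ (Fin p)) (x₁ x₂ : EuclideanSpace ℝ (Fin n)),
      x₁ ∈ S d₁ → x₂ ∈ S d₂ → ∀ a b : ℝ, 0 ≤ a → 0 ≤ b → a + b = 1 →
      a • x₁ + b • x₂ ∈ S (a • d₁ + b • d₂) := by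
    intro d₁ d₂ x₁ x₂ hx₁ hx₂ a b ha hb hab
    rw [hmem] at hx₁ hx₂ ⊢
    have eG : G.mulVec (a • x₁ + b • x₂) = a • G.mulVec x₁ + b • G.mulVec x₂ := by
      show emulVecL G (a • x₁ + b • x₂) = _
      rw [map_add, map_smul, map_smul]; rfl
    have eE : E.mulVec (a • x₁ + b • x₂) = a • E.mulVec x₁ + b • E.mulVec x₂ := by
      show emulVecL E (a • x₁ + b • x₂) = _
      rw [map_add, map_smul, map_smul]; rfl
    have eQ : Q.mulVec (a • d₁ + b • d₂) = a • Q.mulVec d₁ + b • Q.mulVec d₂ := by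
      show emulVecL Q (a • d₁ + b • d₂) = _
      rw [map_add, map_smul, map_smul]; rfl
    constructor
    · intro i
      have g1 := hx₁.1 i; have g2 := hx₂.1 i
      simp only [WithLp.ofLp_add, WithLp.ofLp_smul]; rw [eG]; simp only [Pi.add_apply, Pi.smul_apply, smul_eq_mul]
      calc a * G.mulVec x₁ i + b * G.mulVec x₂ i
          ≤ a * h i + b * h i :=
            add_le_add (mul_le_mul_of_nonneg_left g1 ha) (mul_le_mul_of_nonneg_left g2 hb)
        _ = h i := by linear_combination (h i) * hab
    · intro j
      simp only [WithLp.ofLp_add, WithLp.ofLp_smul]; rw [eE, eQ]; simp only [Pi.add_apply, Pi.smul_apply, smul_eq_mul]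
      rw [hx₁.2 j, hx₂.2 j]
      linear_combination (q₀ j) * hab
  have hsc : ∀ d ∈ Dfeas, ∀ y ∈ S d,
      ‖y - xstar d‖ ^ 2 ≤ 2 * (‖y - z‖ ^ 2 - ‖xstar d - z‖ ^ 2) := by
    intro d hd y hy
    have hm : (2⁻¹ : ℝ) • y + (2⁻¹ : ℝ) • (xstar d) ∈ S d := by
      have h0 := hmix d d y (xstar d) hy (hstar d hd) 2⁻¹ 2⁻¹ (by norm_num) (by norm_num)
        (by norm_num)
      have hdd : (2⁻¹ : ℝ) • d + (2⁻¹ : ℝ) • d = d := by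
        rw [← add_smul]; norm_num
      rwa [hdd] at h0
    have h1 : ‖xstar d - z‖ ≤ ‖(2⁻¹ : ℝ) • y + (2⁻¹ : ℝ) • (xstar d) - z‖ := hmin d hd _ hm
    have e1 : (2⁻¹ : ℝ) • y + (2⁻¹ : ℝ) • (xstar d) - z
        = (2⁻¹ : ℝ) • ((y - z) + (xstar d - z)) := by module
    have e2 : y - xstar d = (y - z) - (xstar d - z) := by module
    have h2 : ‖(2⁻¹:ℝ) • ((y - z) + (xstar d - z))‖ = 2⁻¹ * ‖(y - z) + (xstar d - z)‖ := by
      rw [norm_smul]; norm_num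
    have h3 := norm_add_sq_real (y - z) (xstar d - z)
    have h4 := norm_sub_sq_real (y - z) (xstar d - z)
    rw [e1, h2] at h1
    have h5 : ‖xstar d - z‖^2 ≤ (2⁻¹ * ‖(y - z) + (xstar d - z)‖)^2 :=
      pow_le_pow_left₀ (norm_nonneg _) h1 2
    rw [e2, h4]
    nlinarith [h5, h3]
  have huniq : ∀ d ∈ Dfeas, ∀ x', x' ∈ S d →
      (∀ y ∈ S d, ‖x' - z‖ ≤ ‖y - z‖) → x' = xstar d := by
    intro d hd x' hx' hmin'
    have h1 := hsc d hd x' hx'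
    have h2 : ‖x' - z‖ ≤ ‖xstar d - z‖ := hmin' _ (hstar d hd)
    have h3 : ‖x' - z‖ ^ 2 ≤ ‖xstar d - z‖ ^ 2 := pow_le_pow_left₀ (norm_nonneg _) h2 2
    have h5 : x' - xstar d = 0 := by
      rw [← norm_eq_zero]
      nlinarith [norm_nonneg (x' - xstar d), sq_nonneg ‖x' - xstar d‖]
    exact sub_eq_zero.mp h5
  have hperp : ∀ d ∈ Dfeas, ∀ v : EuclideanSpace ℝ (Fin n), E.mulVec v = 0 →
      (∀ i, G.mulVec (xstar d) i = h i → G.mulVec v i = 0) →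
      ⟪xstar d - z, v⟫ = 0 := by
    intro d hd v hEv hGv
    have hx := hstar d hd
    rw [hmem] at hx
    have hAdd : ∀ δ : ℝ, ∀ i, G.mulVec ((xstar d) + δ • v) i
        = G.mulVec (xstar d) i + δ * G.mulVec v i := by
      intro δ i
      have : G.mulVec ((xstar d) + δ • v) = G.mulVec (xstar d) + δ • G.mulVec v := by
        show emulVecL G ((xstar d) + δ • v) = _
        rw [map_add, map_smul]; rfl
      rw [this]; simp
    have hAddE : ∀ δ : ℝ, ∀ j, E.mulVec ((xstar d) + δ • v) j
        = E.mulVec (xstar d) j + δ * E.mulVec v j := by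
      intro δ j
      have : E.mulVec ((xstar d) + δ • v) = E.mulVec (xstar d) + δ • E.mulVec v := by
        show emulVecL E ((xstar d) + δ • v) = _
        rw [map_add, map_smul]; rfl
      rw [this]; simp
    have hfeas : ∀ᶠ δ : ℝ in nhds 0, ((xstar d) + δ • v) ∈ S d := by
      have hG : ∀ᶠ δ : ℝ in nhds 0, ∀ i, G.mulVec ((xstar d) + δ • v) i ≤ h i := by
        rw [Filter.eventually_all]
        intro i
        by_cases hact : G.mulVec (xstar d) i = h i
        · filter_upwards with δ
          rw [hAdd δ i, hGv i hact, hact]; simp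
        · have hlt : G.mulVec (xstar d) i < h i := lt_of_le_of_ne (hx.1 i) hact
          have htd : Filter.Tendsto (fun δ : ℝ => G.mulVec (xstar d) i + δ * G.mulVec v i)
              (nhds 0) (nhds (G.mulVec (xstar d) i)) := by
            have hc : Continuous (fun δ : ℝ => G.mulVec (xstar d) i + δ * G.mulVec v i) := by
              fun_prop
            simpa using hc.tendsto (0:ℝ)
          filter_upwards [htd.eventually_lt_const hlt] with δ hδ
          rw [hAdd δ i]; exact le_of_lt hδ
      filter_upwards [hG] with δ hδ
      rw [hmem]
      refine ⟨hδ, fun j => ?_⟩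
      simp only [WithLp.ofLp_add, WithLp.ofLp_smul]; rw [hAddE δ j]
      have : E.mulVec v j = 0 := by rw [hEv]; rfl
      rw [this, mul_zero, add_zero]; exact hx.2 j
    have hineq : ∀ᶠ δ : ℝ in nhds 0,
        0 ≤ 2 * δ * ⟪xstar d - z, v⟫ + δ^2 * ‖v‖^2 := by
      filter_upwards [hfeas] with δ hδ
      have h1 := hmin d hd _ hδ
      have e1 : (xstar d) + δ • v - z = (xstar d - z) + δ • v := by module
      have h2 : ‖(xstar d - z) + δ • v‖^2
          = ‖xstar d - z‖^2 + 2 * (δ * ⟪xstar d - z, v⟫) + ‖δ • v‖^2 := by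
        rw [norm_add_sq_real, real_inner_smul_right]
      have h3 : ‖δ • v‖^2 = δ^2 * ‖v‖^2 := by
        rw [norm_smul]; simp [mul_pow, sq_abs]
      have h4 : ‖xstar d - z‖^2 ≤ ‖(xstar d - z) + δ • v‖^2 := by
        rw [← e1]
        exact pow_le_pow_left₀ (norm_nonneg _) h1 2
      rw [h2, h3] at h4
      linarith
    have hpos : 0 ≤ 2 * ⟪xstar d - z, v⟫ := by
      have hev : ∀ᶠ δ : ℝ in nhdsWithin 0 (Set.Ioi 0),
          0 ≤ 2 * ⟪xstar d - z, v⟫ + δ * ‖v‖^2 := by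
        filter_upwards [hineq.filter_mono nhdsWithin_le_nhds, eventually_mem_nhdsWithin]
          with δ h1 h2
        have hδ : (0:ℝ) < δ := h2
        have : 0 ≤ δ * (2 * ⟪xstar d - z, v⟫ + δ * ‖v‖^2) := by nlinarith
        exact nonneg_of_mul_nonneg_right this hδ
      have htd : Filter.Tendsto (fun δ : ℝ => 2 * ⟪xstar d - z, v⟫ + δ * ‖v‖^2)
          (nhdsWithin 0 (Set.Ioi 0)) (nhds (2 * ⟪xstar d - z, v⟫)) := by
        have hc : Continuous (fun δ : ℝ => 2 * ⟪xstar d - z, v⟫ + δ * ‖v‖^2) := by fun_prop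
        simpa using (hc.tendsto (0:ℝ)).mono_left nhdsWithin_le_nhds
      exact ge_of_tendsto htd hev
    have hneg : 2 * ⟪xstar d - z, v⟫ ≤ 0 := by
      have hev : ∀ᶠ δ : ℝ in nhdsWithin 0 (Set.Iio 0),
          2 * ⟪xstar d - z, v⟫ + δ * ‖v‖^2 ≤ 0 := by
        filter_upwards [hineq.filter_mono nhdsWithin_le_nhds, eventually_mem_nhdsWithin]
          with δ h1 h2
        have hδ : δ < (0:ℝ) := h2
        nlinarith
      have htd : Filter.Tendsto (fun δ : ℝ => 2 * ⟪xstar d - z, v⟫ + δ * ‖v‖^2)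
          (nhdsWithin 0 (Set.Iio 0)) (nhds (2 * ⟪xstar d - z, v⟫)) := by
        have hc : Continuous (fun δ : ℝ => 2 * ⟪xstar d - z, v⟫ + δ * ‖v‖^2) := by fun_prop
        simpa using (hc.tendsto (0:ℝ)).mono_left nhdsWithin_le_nhds
      exact le_of_tendsto htd hev
    linarith
  -- constants
  obtain ⟨CQ, hCQ0, hCQ⟩ := emulVecL_bound Q
  set ΦJ : Finset (Fin m₁) → (EuclideanSpace ℝ (Fin n) →ₗ[ℝ] ((Fin m₂ → ℝ) × (Fin m₁ → ℝ))) :=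
    fun J => (emulVecL E).prod ((maskL J).comp (emulVecL G)) with hΦJ
  choose CJ hCJ0 hCJ using fun J => aux_ker_bound (ΦJ J)
  have hneJ : (Finset.univ : Finset (Finset (Fin m₁))).Nonempty := Finset.univ_nonempty
  set Cmax : ℝ := Finset.univ.sup' hneJ CJ with hCmaxdef
  have hCmax0 : 0 ≤ Cmax := le_trans (hCJ0 ∅) (Finset.le_sup' _ (Finset.mem_univ _))
  have hCmaxJ : ∀ J, CJ J ≤ Cmax := fun J => Finset.le_sup' _ (Finset.mem_univ _)
  have hkey : ∀ d₁, d₁ ∈ Dfeas → ∀ d₂, d₂ ∈ Dfeas →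
      (∀ i, G.mulVec (xstar d₁) i = h i ↔ G.mulVec (xstar d₂) i = h i) →
      ‖xstar d₁ - xstar d₂‖ ≤ Cmax * CQ * ‖d₁ - d₂‖ := by
    intro d₁ hd₁ d₂ hd₂ hiff
    set J : Finset (Fin m₁) := Finset.univ.filter (fun i => G.mulVec (xstar d₁) i = h i) with hJ
    set w : EuclideanSpace ℝ (Fin n) := xstar d₁ - xstar d₂ with hwdef
    have hx₁ := hstar d₁ hd₁
    have hx₂ := hstar d₂ hd₂
    rw [hmem] at hx₁ hx₂
    have hGw : G.mulVec w = G.mulVec (xstar d₁) - G.mulVec (xstar d₂) := by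
      show emulVecL G (xstar d₁ - xstar d₂) = _
      rw [map_sub]; rfl
    have hEw : E.mulVec w = Q.mulVec (d₁ - d₂) := by
      have e1 : E.mulVec w = E.mulVec (xstar d₁) - E.mulVec (xstar d₂) := by
        show emulVecL E (xstar d₁ - xstar d₂) = _
        rw [map_sub]; rfl
      have e2 : Q.mulVec (d₁ - d₂) = Q.mulVec d₁ - Q.mulVec d₂ := by
        show emulVecL Q (d₁ - d₂) = _
        rw [map_sub]; rfl
      rw [e1, e2]
      funext j
      simp only [Pi.sub_apply, hx₁.2 j, hx₂.2 j]
      ring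
    have hwperp : w ∈ (LinearMap.ker (ΦJ J))ᗮ := by
      rw [Submodule.mem_orthogonal]
      intro v hv
      rw [LinearMap.mem_ker] at hv
      have hv1 : E.mulVec v = 0 := congrArg Prod.fst hv
      have hv2 : ∀ i, i ∈ J → G.mulVec v i = 0 := by
        intro i hi
        have h0 := congrFun (congrArg Prod.snd hv) i
        simp [hΦJ, maskL, LinearMap.prod_apply, hi] at h0; exact h0
      have hGv : ∀ i, G.mulVec (xstar d₁) i = h i → G.mulVec v i = 0 := fun i hi =>
        hv2 i (by simp [hJ, hi])
      have hGv₂ : ∀ i, G.mulVec (xstar d₂) i = h i → G.mulVec v i = 0 := fun i hi =>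
        hGv i ((hiff i).mpr hi)
      have p1 := hperp d₁ hd₁ v hv1 hGv
      have p2 := hperp d₂ hd₂ v hv1 hGv₂
      have e3 : w = (xstar d₁ - z) - (xstar d₂ - z) := by rw [hwdef]; module
      rw [real_inner_comm, e3, inner_sub_left, p1, p2, sub_zero]
    have hΦw : ΦJ J w = (Q.mulVec (d₁ - d₂), (0 : Fin m₁ → ℝ)) := by
      have h2 : (fun i => if i ∈ J then G.mulVec w i else 0) = (0 : Fin m₁ → ℝ) := by
        funext i
        by_cases hi : i ∈ J
        · have a1 : G.mulVec (xstar d₁) i = h i := by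
            have := hi; rw [hJ, Finset.mem_filter] at this; exact this.2
          have a2 : G.mulVec (xstar d₂) i = h i := (hiff i).mp a1
          simp only [hi, if_true, hGw, Pi.sub_apply, a1, a2, sub_self, Pi.zero_apply]
        · simp [hi]
      have : ΦJ J w = (E.mulVec w, fun i => if i ∈ J then G.mulVec w i else 0) := rfl
      rw [this, hEw, h2]
    have hnormΦ : ‖ΦJ J w‖ ≤ CQ * ‖d₁ - d₂‖ := by
      rw [hΦw, Prod.norm_def]
      simp only [norm_zero]
      rw [max_eq_left (norm_nonneg _)]
      exact hCQ _
    calc ‖xstar d₁ - xstar d₂‖ = ‖w‖ := rfl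
      _ ≤ CJ J * ‖ΦJ J w‖ := hCJ J w hwperp
      _ ≤ Cmax * (CQ * ‖d₁ - d₂‖) := by
          apply mul_le_mul (hCmaxJ J) hnormΦ (norm_nonneg _) hCmax0
      _ = Cmax * CQ * ‖d₁ - d₂‖ := by ring
  refine ⟨Cmax * CQ, mul_nonneg hCmax0 hCQ0, ?_⟩
  intro d hd d' hd'
  obtain ⟨u, hu⟩ : (S d).Nonempty := by rw [hDfeas] at hd; exact hd
  obtain ⟨v, hv⟩ : (S d').Nonempty := by rw [hDfeas] at hd'; exact hd'
  set L : ℝ := Cmax * CQ * ‖d' - d‖ with hLdef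
  have hL0 : 0 ≤ L := by positivity
  set γ : ℝ → EuclideanSpace ℝ (Fin p) := fun t => d + t • (d' - d) with hγdef
  set f : ℝ → EuclideanSpace ℝ (Fin n) := fun t => xstar (γ t) with hfdef
  have hγc : ∀ a b : ℝ, ∀ μ : ℝ, (1-μ) • γ a + μ • γ b = γ ((1-μ)*a + μ*b) := by
    intro a b μ; simp only [hγdef]; module
  have hγconv : ∀ t : ℝ, γ t = (1 - t) • d + t • d' := by
    intro t; simp only [hγdef]; module
  have hγmem : ∀ t ∈ Set.Icc (0:ℝ) 1, (1 - t) • u + t • v ∈ S (γ t) := by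
    intro t ht
    rw [hγconv t]
    exact hmix d d' u v hu hv (1 - t) t (by linarith [ht.2]) ht.1 (by ring)
  have hfeas : ∀ t ∈ Set.Icc (0:ℝ) 1, γ t ∈ Dfeas := by
    intro t ht; rw [hDfeas]; exact ⟨_, hγmem t ht⟩
  have hmixt : ∀ a ∈ Set.Icc (0:ℝ) 1, ∀ b ∈ Set.Icc (0:ℝ) 1, ∀ μ ∈ Set.Icc (0:ℝ) 1,
      (1-μ) • f a + μ • f b ∈ S (γ ((1-μ)*a + μ*b)) := by
    intro a ha b hb μ hμ
    have h0 := hmix (γ a) (γ b) (f a) (f b) (hstar _ (hfeas a ha)) (hstar _ (hfeas b hb))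
      (1-μ) μ (by linarith [hμ.2]) hμ.1 (by ring)
    rwa [hγc a b μ] at h0
  set val : ℝ → ℝ := fun t => ‖f t - z‖ with hvaldef
  set Rv : ℝ := max ‖u - z‖ ‖v - z‖ with hRvdef
  have hRv0 : 0 ≤ Rv := le_trans (norm_nonneg _) (le_max_left _ _)
  have hvalR : ∀ t ∈ Set.Icc (0:ℝ) 1, val t ≤ Rv := by
    intro t ht
    have h1 : val t ≤ ‖(1-t) • u + t • v - z‖ := hmin _ (hfeas t ht) _ (hγmem t ht)
    have e : (1-t) • u + t • v - z = (1-t) • (u - z) + t • (v - z) := by module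
    calc val t ≤ ‖(1-t) • u + t • v - z‖ := h1
      _ ≤ (1-t) * ‖u - z‖ + t * ‖v - z‖ := by
          rw [e]
          refine (norm_add_le _ _).trans ?_
          rw [norm_smul, norm_smul, Real.norm_eq_abs, Real.norm_eq_abs,
            abs_of_nonneg (by linarith [ht.2]), abs_of_nonneg ht.1]
      _ ≤ (1-t) * Rv + t * Rv := by
          have r1 : ‖u - z‖ ≤ Rv := le_max_left _ _
          have r2 : ‖v - z‖ ≤ Rv := le_max_right _ _
          have : (0:ℝ) ≤ 1 - t := by linarith [ht.2]
          exact add_le_add (mul_le_mul_of_nonneg_left r1 this)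
            (mul_le_mul_of_nonneg_left r2 ht.1)
      _ = Rv := by ring
  have hchord : ∀ a ∈ Set.Icc (0:ℝ) 1, ∀ b ∈ Set.Icc (0:ℝ) 1, ∀ μ ∈ Set.Icc (0:ℝ) 1,
      val ((1-μ)*a + μ*b) ≤ (1-μ) * val a + μ * val b := by
    intro a ha b hb μ hμ
    have hab : (1-μ)*a + μ*b ∈ Set.Icc (0:ℝ) 1 := by
      constructor
      · nlinarith [ha.1, hb.1, hμ.1, hμ.2]
      · nlinarith [ha.2, hb.2, hμ.1, hμ.2]
    have h1 : val ((1-μ)*a + μ*b) ≤ ‖(1-μ) • f a + μ • f b - z‖ :=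
      hmin _ (hfeas _ hab) _ (hmixt a ha b hb μ hμ)
    have e : (1-μ) • f a + μ • f b - z = (1-μ) • (f a - z) + μ • (f b - z) := by module
    calc val ((1-μ)*a + μ*b) ≤ ‖(1-μ) • f a + μ • f b - z‖ := h1
      _ ≤ (1-μ) * ‖f a - z‖ + μ * ‖f b - z‖ := by
          rw [e]
          refine (norm_add_le _ _).trans ?_
          rw [norm_smul, norm_smul, Real.norm_eq_abs, Real.norm_eq_abs,
            abs_of_nonneg (by linarith [hμ.2]), abs_of_nonneg hμ.1]
      _ = (1-μ) * val a + μ * val b := rfl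
  have husc : ∀ t ∈ Set.Icc (0:ℝ) 1, ∀ s ∈ Set.Icc (0:ℝ) 1,
      val s ≤ val t + |s - t| * (Rv * max (1-t)⁻¹ t⁻¹) := by
    intro t ht s hs
    have hvt0 : (0:ℝ) ≤ val t := norm_nonneg _
    have hMnn : 0 ≤ Rv * max (1-t)⁻¹ t⁻¹ :=
      mul_nonneg hRv0 (le_trans (inv_nonneg.mpr (by linarith [ht.2])) (le_max_left _ _))
    rcases le_or_gt t s with hts | hts
    · by_cases ht1 : t = 1
      · have hs1 : s = 1 := le_antisymm hs.2 (ht1 ▸ hts)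
        rw [hs1, ht1]
        simpa using mul_nonneg (abs_nonneg (1-(1:ℝ))) hMnn
      · have h1t : (0:ℝ) < 1 - t := by
          have := lt_of_le_of_ne ht.2 ht1; linarith
        set μ := (s - t)/(1 - t) with hμdef
        have hμmem : μ ∈ Set.Icc (0:ℝ) 1 :=
          ⟨div_nonneg (by linarith) (le_of_lt h1t), by rw [div_le_one h1t]; linarith [hs.2]⟩
        have hrepr : (1-μ)*t + μ*1 = s := by
          have hne : (1:ℝ) - t ≠ 0 := ne_of_gt h1t
          rw [hμdef]; field_simp; ring
        have hc := hchord t ht 1 ⟨zero_le_one, le_refl 1⟩ μ hμmem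
        rw [hrepr] at hc
        have hv1 : val 1 ≤ Rv := hvalR 1 ⟨zero_le_one, le_refl 1⟩
        have hμval : μ * (val 1 - val t) ≤ |s - t| * (Rv * max (1-t)⁻¹ t⁻¹) := by
          have e1 : |s - t| = s - t := abs_of_nonneg (by linarith)
          have e2 : (1-t)⁻¹ ≤ max (1-t)⁻¹ t⁻¹ := le_max_left _ _
          have hμeq : μ = (s-t) * (1-t)⁻¹ := div_eq_mul_inv _ _
          have h3 : val 1 - val t ≤ Rv := by linarith
          calc μ * (val 1 - val t) ≤ μ * Rv := mul_le_mul_of_nonneg_left h3 hμmem.1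
            _ = (s-t) * ((1-t)⁻¹ * Rv) := by rw [hμeq]; ring
            _ ≤ (s-t) * (max (1-t)⁻¹ t⁻¹ * Rv) := by
                exact mul_le_mul_of_nonneg_left (mul_le_mul_of_nonneg_right e2 hRv0)
                  (by linarith)
            _ = |s - t| * (Rv * max (1-t)⁻¹ t⁻¹) := by rw [e1]; ring
        nlinarith [hc]
    · have ht0 : (0:ℝ) < t := lt_of_le_of_lt hs.1 hts
      set μ := (t - s)/t with hμdef
      have hμmem : μ ∈ Set.Icc (0:ℝ) 1 :=
        ⟨div_nonneg (by linarith) (le_of_lt ht0), by rw [div_le_one ht0]; linarith [hs.1]⟩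
      have hrepr : (1-μ)*t + μ*0 = s := by
        have hne : t ≠ 0 := ne_of_gt ht0
        rw [hμdef]; field_simp; ring
      have hc := hchord t ht 0 ⟨le_refl 0, zero_le_one⟩ μ hμmem
      rw [hrepr] at hc
      have hv0 : val 0 ≤ Rv := hvalR 0 ⟨le_refl 0, zero_le_one⟩
      have hμval : μ * (val 0 - val t) ≤ |s - t| * (Rv * max (1-t)⁻¹ t⁻¹) := by
        have e1 : |s - t| = t - s := by rw [abs_sub_comm]; exact abs_of_nonneg (by linarith)
        have e2 : t⁻¹ ≤ max (1-t)⁻¹ t⁻¹ := le_max_right _ _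
        have hμeq : μ = (t-s) * t⁻¹ := div_eq_mul_inv _ _
        have h3 : val 0 - val t ≤ Rv := by linarith
        calc μ * (val 0 - val t) ≤ μ * Rv := mul_le_mul_of_nonneg_left h3 hμmem.1
          _ = (t-s) * (t⁻¹ * Rv) := by rw [hμeq]; ring
          _ ≤ (t-s) * (max (1-t)⁻¹ t⁻¹ * Rv) := by
              exact mul_le_mul_of_nonneg_left (mul_le_mul_of_nonneg_right e2 hRv0)
                (by linarith)
          _ = |s - t| * (Rv * max (1-t)⁻¹ t⁻¹) := by rw [e1]; ring
      nlinarith [hc]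
  have hγcont : Continuous γ := by
    rw [hγdef]; exact continuous_const.add (continuous_id.smul continuous_const)
  have hGic : ∀ i, Continuous fun x : EuclideanSpace ℝ (Fin n) => G.mulVec x i :=
    fun i => (continuous_apply i).comp (emulVecL_cont G)
  have hEjc : ∀ j, Continuous fun x : EuclideanSpace ℝ (Fin n) => E.mulVec x j :=
    fun j => (continuous_apply j).comp (emulVecL_cont E)
  have hQjc : ∀ j, Continuous fun u : EuclideanSpace ℝ (Fin p) => Q.mulVec u j :=
    fun j => (continuous_apply j).comp (emulVecL_cont Q)
  have hcont : ContinuousOn f (Set.Icc (0:ℝ) 1) := by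
    intro t ht
    rw [ContinuousWithinAt, Filter.tendsto_iff_seq_tendsto]
    intro sq hsq
    have hsqt : Filter.Tendsto sq Filter.atTop (nhds t) := hsq.mono_right nhdsWithin_le_nhds
    have hsqm : ∀ᶠ k in Filter.atTop, sq k ∈ Set.Icc (0:ℝ) 1 :=
      hsq.eventually eventually_mem_nhdsWithin
    apply Filter.tendsto_of_subseq_tendsto
    intro ns hns
    have hmem2 : ∀ᶠ k in Filter.atTop, sq (ns k) ∈ Set.Icc (0:ℝ) 1 := hns.eventually hsqm
    have hball : ∃ᶠ k in Filter.atTop, ((f ∘ sq) ∘ ns) k ∈ Metric.closedBall z Rv := by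
      apply (hmem2.mono ?_).frequently
      intro k hk
      simp only [Function.comp_apply, Metric.mem_closedBall, dist_eq_norm]
      exact hvalR (sq (ns k)) hk
    rcases tendsto_subseq_of_frequently_bounded Metric.isBounded_closedBall hball with
      ⟨xb, hxbcl, φ, hφ, hφt⟩
    set a : ℕ → ℝ := fun k => sq (ns (φ k)) with hadef
    have hat : Filter.Tendsto a Filter.atTop (nhds t) :=
      hsqt.comp (hns.comp hφ.tendsto_atTop)
    have ham : ∀ᶠ k in Filter.atTop, a k ∈ Set.Icc (0:ℝ) 1 :=
      hφ.tendsto_atTop.eventually hmem2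
    have hfa : Filter.Tendsto (fun k => f (a k)) Filter.atTop (nhds xb) := hφt
    have hxbS : xb ∈ S (γ t) := by
      rw [hmem]
      constructor
      · intro i
        have hle : ∀ᶠ k in Filter.atTop, G.mulVec (f (a k)) i ≤ h i := by
          filter_upwards [ham] with k hk
          exact ((hmem _ _).mp (hstar _ (hfeas _ hk))).1 i
        have hGt : Filter.Tendsto (fun k => G.mulVec (f (a k)) i) Filter.atTop
            (nhds (G.mulVec xb i)) := ((hGic i).tendsto xb).comp hfa
        exact le_of_tendsto hGt hle
      · intro j
        have hEt : Filter.Tendsto (fun k => E.mulVec (f (a k)) j) Filter.atTop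
            (nhds (E.mulVec xb j)) := ((hEjc j).tendsto xb).comp hfa
        have hQt : Filter.Tendsto (fun k => Q.mulVec (γ (a k)) j + q₀ j) Filter.atTop
            (nhds (Q.mulVec (γ t) j + q₀ j)) := by
          have h1 : Filter.Tendsto (fun k => γ (a k)) Filter.atTop (nhds (γ t)) :=
            (hγcont.tendsto t).comp hat
          exact (((hQjc j).tendsto (γ t)).comp h1).add tendsto_const_nhds
        have heq : ∀ᶠ k in Filter.atTop,
            E.mulVec (f (a k)) j = Q.mulVec (γ (a k)) j + q₀ j := by
          filter_upwards [ham] with k hk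
          exact ((hmem _ _).mp (hstar _ (hfeas _ hk))).2 j
        have hEt' : Filter.Tendsto (fun k => Q.mulVec (γ (a k)) j + q₀ j) Filter.atTop
            (nhds (E.mulVec xb j)) := hEt.congr' heq
        exact tendsto_nhds_unique hEt' hQt
    have hxbmin : ∀ y ∈ S (γ t), ‖xb - z‖ ≤ ‖y - z‖ := by
      intro y hy
      have h1 : Filter.Tendsto (fun k => ‖f (a k) - z‖) Filter.atTop (nhds ‖xb - z‖) :=
        (hfa.sub tendsto_const_nhds).norm
      have h2 : ∀ᶠ k in Filter.atTop,
          ‖f (a k) - z‖ ≤ val t + |a k - t| * (Rv * max (1-t)⁻¹ t⁻¹) := by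
        filter_upwards [ham] with k hk
        exact husc t ht (a k) hk
      have h3 : Filter.Tendsto (fun k => val t + |a k - t| * (Rv * max (1-t)⁻¹ t⁻¹))
          Filter.atTop (nhds (val t)) := by
        have hcont3 : Continuous (fun x : ℝ => val t + |x - t| * (Rv * max (1-t)⁻¹ t⁻¹)) := by
          fun_prop
        have := (hcont3.tendsto t).comp hat
        simp only [sub_self, abs_zero, zero_mul, add_zero] at this; exact this
      have h4 : ‖xb - z‖ ≤ val t := le_of_tendsto_of_tendsto h1 h3 h2
      exact le_trans h4 (hmin _ (hfeas t ht) y hy)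
    have hxbeq : xb = f t := huniq _ (hfeas t ht) xb hxbS hxbmin
    exact ⟨φ, by rw [← hxbeq]; exact hφt⟩
  have hfreq : ∀ x ∈ Set.Ico (0:ℝ) 1, ∀ r : ℝ, L < r →
      ∃ᶠ s in nhdsWithin x (Set.Ioi x), slope (fun t => ‖f t - f 0‖) x s < r := by
    intro x hx r hr
    rw [Filter.frequently_iff]
    intro U hU
    rcases mem_nhdsGT_iff_exists_Ioc_subset.mp hU with ⟨e, he, hsub⟩
    set cp : ℝ := min e 1 with hcp
    have hxc : x < cp := lt_min (Set.mem_Ioi.mp he) hx.2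
    set sk : ℕ → ℝ := fun k => x + (cp - x)/((k:ℝ)+2) with hskdef
    have hskpos : ∀ k : ℕ, 0 < (cp - x)/((k:ℝ)+2) :=
      fun k => div_pos (by linarith) (by positivity)
    have hskle : ∀ k : ℕ, (cp - x)/((k:ℝ)+2) ≤ cp - x := by
      intro k
      rw [div_le_iff₀ (by positivity)]
      nlinarith [hxc, (Nat.cast_nonneg k : (0:ℝ) ≤ (k:ℝ))]
    have hmemIoc : ∀ k : ℕ, sk k ∈ Set.Ioc x cp := by
      intro k
      constructor
      · simp only [hskdef]; linarith [hskpos k]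
      · simp only [hskdef]; linarith [hskle k]
    have hmemIcc : ∀ k, sk k ∈ Set.Icc (0:ℝ) 1 := fun k =>
      ⟨le_trans hx.1 (le_of_lt (hmemIoc k).1), le_trans (hmemIoc k).2 (min_le_right e 1)⟩
    have hskt : Filter.Tendsto sk Filter.atTop (nhds x) := by
      have h1 : Filter.Tendsto (fun k : ℕ => ((k:ℝ)+2)) Filter.atTop Filter.atTop :=
        Filter.tendsto_atTop_add_const_right _ 2 tendsto_natCast_atTop_atTop
      have h2 : Filter.Tendsto (fun k : ℕ => ((k:ℝ)+2)⁻¹) Filter.atTop (nhds 0) :=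
        h1.inv_tendsto_atTop
      have h3 : Filter.Tendsto (fun k : ℕ => (cp - x) * ((k:ℝ)+2)⁻¹) Filter.atTop
          (nhds ((cp - x) * 0)) := h2.const_mul _
      have h4 : Filter.Tendsto (fun k : ℕ => x + (cp - x) * ((k:ℝ)+2)⁻¹) Filter.atTop
          (nhds (x + (cp - x) * 0)) := h3.const_add _
      simp only [hskdef, div_eq_mul_inv]
      simpa using h4
    set A : ℕ → Finset (Fin m₁) :=
      fun k => Finset.univ.filter (fun i => G.mulVec (f (sk k)) i = h i) with hA
    have hfib : ∃ J : Finset (Fin m₁), {k | A k = J}.Infinite := by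
      by_contra hcon
      push_neg at hcon
      have hfin : (Set.univ : Set ℕ).Finite := by
        have hcover : (Set.univ : Set ℕ) ⊆
            ⋃ J ∈ (Finset.univ : Finset (Finset (Fin m₁))), {k | A k = J} := by
          intro k _
          simp only [Set.mem_iUnion, Set.mem_setOf_eq]
          exact ⟨A k, Finset.mem_coe.mpr (Finset.mem_univ _), rfl⟩
        exact Set.Finite.subset
          (Set.Finite.biUnion (Finset.finite_toSet _)
            (fun J _ => hcon J)) hcover
      exact Set.infinite_univ hfin
    obtain ⟨J, hJinf⟩ := hfib
    obtain ⟨k₀, hk₀⟩ := hJinf.nonempty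
    refine ⟨sk k₀, hsub ⟨(hmemIoc k₀).1, le_trans (hmemIoc k₀).2 (min_le_left e 1)⟩, ?_⟩
    have hpair : ∀ k₁ ∈ {k | A k = J}, ∀ k₂ ∈ {k | A k = J},
        ‖f (sk k₁) - f (sk k₂)‖ ≤ L * |sk k₁ - sk k₂| := by
      intro k₁ hk₁ k₂ hk₂
      have e1 : A k₁ = J := hk₁
      have e2 : A k₂ = J := hk₂
      have hiff : ∀ i, (G.mulVec (f (sk k₁)) i = h i ↔ G.mulVec (f (sk k₂)) i = h i) := by
        intro i
        constructor
        · intro hh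
          have hmemA : i ∈ A k₁ := by
            rw [hA]; exact Finset.mem_filter.mpr ⟨Finset.mem_univ _, hh⟩
          rw [e1, ← e2, hA] at hmemA
          exact (Finset.mem_filter.mp hmemA).2
        · intro hh
          have hmemA : i ∈ A k₂ := by
            rw [hA]; exact Finset.mem_filter.mpr ⟨Finset.mem_univ _, hh⟩
          rw [e2, ← e1, hA] at hmemA
          exact (Finset.mem_filter.mp hmemA).2
      have hb := hkey (γ (sk k₁)) (hfeas _ (hmemIcc k₁)) (γ (sk k₂)) (hfeas _ (hmemIcc k₂)) hiff
      have hγd : γ (sk k₁) - γ (sk k₂) = (sk k₁ - sk k₂) • (d' - d) := by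
        simp only [hγdef]; module
      calc ‖f (sk k₁) - f (sk k₂)‖ ≤ Cmax * CQ * ‖γ (sk k₁) - γ (sk k₂)‖ := hb
        _ = Cmax * CQ * (|sk k₁ - sk k₂| * ‖d' - d‖) := by
            rw [hγd, norm_smul, Real.norm_eq_abs]
        _ = L * |sk k₁ - sk k₂| := by rw [hLdef]; ring
    set lf := Filter.atTop ⊓ Filter.principal {k | A k = J} with hlf
    have hlfne : lf.NeBot := by
      rw [hlf, ← Filter.frequently_iff_neBot, Nat.frequently_atTop_iff_infinite]
      exact hJinf
    have hmemf : ∀ᶠ k in lf, A k = J := by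
      rw [hlf]
      exact Filter.eventually_inf_principal.mpr (Filter.Eventually.of_forall (fun k hk => hk))
    have hsklf : Filter.Tendsto sk lf (nhds x) := hskt.mono_left inf_le_left
    have hflf : Filter.Tendsto (fun k => f (sk k)) lf (nhds (f x)) := by
      have hxin : x ∈ Set.Icc (0:ℝ) 1 := ⟨hx.1, le_of_lt hx.2⟩
      have hsw : Filter.Tendsto sk lf (nhdsWithin x (Set.Icc (0:ℝ) 1)) :=
        tendsto_nhdsWithin_of_tendsto_nhds_of_eventually_within _ hsklf
          (Filter.Eventually.of_forall fun k => hmemIcc k)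
      exact (hcont x hxin).tendsto.comp hsw
    have hlim1 : Filter.Tendsto (fun k => ‖f (sk k₀) - f (sk k)‖) lf
        (nhds ‖f (sk k₀) - f x‖) := (tendsto_const_nhds.sub hflf).norm
    have hlim2 : Filter.Tendsto (fun k => L * |sk k₀ - sk k|) lf
        (nhds (L * |sk k₀ - x|)) := by
      have hc : Continuous fun y : ℝ => L * |sk k₀ - y| := by fun_prop
      exact (hc.tendsto x).comp hsklf
    have hbound : ‖f (sk k₀) - f x‖ ≤ L * |sk k₀ - x| :=
      le_of_tendsto_of_tendsto hlim1 hlim2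
        (hmemf.mono fun k hk => hpair k₀ hk₀ k hk)
    have hxk : x < sk k₀ := (hmemIoc k₀).1
    have habs : |sk k₀ - x| = sk k₀ - x := abs_of_nonneg (by linarith)
    have hnum : ‖f (sk k₀) - f 0‖ - ‖f x - f 0‖ ≤ L * (sk k₀ - x) := by
      have h5 := norm_sub_norm_le (f (sk k₀) - f 0) (f x - f 0)
      have e5 : (f (sk k₀) - f 0) - (f x - f 0) = f (sk k₀) - f x := by module
      rw [e5] at h5
      rw [habs] at hbound
      linarith
    have hden : 0 < sk k₀ - x := by linarith
    have hslope : slope (fun t => ‖f t - f 0‖) x (sk k₀)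
        = (‖f (sk k₀) - f 0‖ - ‖f x - f 0‖) / (sk k₀ - x) := slope_def_field _ _ _
    rw [hslope]
    calc (‖f (sk k₀) - f 0‖ - ‖f x - f 0‖) / (sk k₀ - x) ≤ L := by
          rw [div_le_iff₀ hden]; linarith [hnum]
      _ < r := hr
  have hcontg : ContinuousOn (fun t => ‖f t - f 0‖) (Set.Icc (0:ℝ) 1) :=
    (hcont.sub continuousOn_const).norm
  have hfin : ‖f 1 - f 0‖ ≤ L * 1 := by
    have hB : ∀ x ∈ Set.Ico (0:ℝ) 1, HasDerivWithinAt (fun t => L * t) L (Set.Ici x) x := by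
      intro x hx
      simpa using ((hasDerivAt_id x).const_mul L).hasDerivWithinAt (s := Set.Ici x)
    have := image_le_of_liminf_slope_right_le_deriv_boundary (a := 0) (b := 1)
      hcontg (by simp) ((continuousOn_const.mul continuousOn_id)) hB
      (fun x hx r hr => hfreq x hx r hr)
    simpa using this (Set.right_mem_Icc.mpr zero_le_one)
  have hγ0 : γ 0 = d := by simp [hγdef]
  have hγ1 : γ 1 = d' := by simp [hγdef]
  have : ‖xstar d' - xstar d‖ ≤ L := by
    have : f 1 = xstar d' := by rw [hfdef]; simp [hγ1]
    have h0 : f 0 = xstar d := by rw [hfdef]; simp [hγ0]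
    calc ‖xstar d' - xstar d‖ = ‖f 1 - f 0‖ := by rw [this, h0]
      _ ≤ L * 1 := hfin
      _ = L := mul_one L
  calc ‖xstar d - xstar d'‖ = ‖xstar d' - xstar d‖ := norm_sub_rev _ _
    _ ≤ L := this
    _ = Cmax * CQ * ‖d - d'‖ := by rw [hLdef, norm_sub_rev]
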